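/- arXiv:math/0610826 — 2 statements merged into one kernel-verified Lean document; each statement's English description precedes it below -/
import Mathlib

section
/- Let E_n(x) = (1/n)·Σᵢ Q(xᵢ) - (2/(n(n-1)))·Σ_{i<j} log|xᵢ - xⱼ| for x ∈ ℝⁿ with distinct coordinates, and let Δ_n = inf over such x of E_n(x). Then Δ_n ≤ Δ_{n+1} for all n ≥ 2. -/
open Finset

/-- The discrete energy of a configuration of `n` points. -/
noncomputable def discreteEnergy (Q : ℝ → ℝ) (n : ℕ) (x : Fin n → ℝ) : ℝ :=
  (1 / (n : ℝ)) * ∑ i, Q (x i)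
    - (2 / ((n : ℝ) * ((n : ℝ) - 1))) *
        ∑ p ∈ Finset.univ.filter (fun p : Fin n × Fin n => p.1 < p.2),
          Real.log |x p.1 - x p.2|

/-- The minimal discrete energy over configurations with distinct coordinates. -/
noncomputable def minEnergy (Q : ℝ → ℝ) (n : ℕ) : ℝ :=
  sInf {E : ℝ | ∃ x : Fin n → ℝ, Function.Injective x ∧ E = discreteEnergy Q n x}


lemma log_abs_sub_le (s a b : ℝ) (hs : 0 < s) :
    Real.log |a - b| ≤ s * (a ^ 2 + b ^ 2) + max (-Real.log s) 0 := by
  have hK0 : 0 ≤ max (-Real.log s) 0 := le_max_right _ _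
  have hK1 : -Real.log s ≤ max (-Real.log s) 0 := le_max_left _ _
  rcases eq_or_ne a b with h | h
  · have : a - b = 0 := by rw [h]; ring
    rw [this]; simp
    positivity
  · have hd : (0:ℝ) < (a - b) ^ 2 := by
      have := sub_ne_zero.mpr h; positivity
    have hu : 0 < s * (a - b) ^ 2 := by positivity
    have h1 : Real.log (s * (a - b) ^ 2) ≤ s * (a - b) ^ 2 - 1 :=
      Real.log_le_sub_one_of_pos hu
    have h2 : Real.log (s * (a - b) ^ 2) = Real.log s + 2 * Real.log |a - b| := by
      rw [Real.log_mul (ne_of_gt hs) (ne_of_gt hd), ← sq_abs, Real.log_pow]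
      push_cast; ring
    have h3 : s * (a - b) ^ 2 ≤ s * (2 * (a ^ 2 + b ^ 2)) := by
      apply mul_le_mul_of_nonneg_left _ hs.le
      nlinarith [sq_nonneg (a + b)]
    linarith


lemma quad_lower (Q : ℝ → ℝ) (hQcont : Continuous Q) (ρ : ℝ) (hρ : 0 < ρ)
    (hQ : ConvexOn ℝ Set.univ (fun x => Q x - ρ * x ^ 2)) :
    ∃ D : ℝ, ∀ x : ℝ, ρ / 2 * x ^ 2 - D ≤ Q x := by
  set g : ℝ → ℝ := fun x => Q x - ρ * x ^ 2 with hg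
  have hgc : Continuous g := hQcont.sub (continuous_const.mul (continuous_pow 2))
  obtain ⟨z, hz, hzmin⟩ := (isCompact_Icc (a := (-1:ℝ)) (b := 1)).exists_isMinOn
    ⟨0, by norm_num⟩ hgc.continuousOn
  obtain ⟨A, hA0, hA1, hA2⟩ : ∃ A : ℝ, 0 ≤ A ∧ -A ≤ g 1 - g 0 ∧ -A ≤ g (-1) - g 0 :=
    ⟨|g 1 - g 0| + |g (-1) - g 0|, by positivity,
      by have h := neg_abs_le (g 1 - g 0); have h2 := abs_nonneg (g (-1) - g 0); linarith,
      by have h := neg_abs_le (g (-1) - g 0); have h2 := abs_nonneg (g 1 - g 0); linarith⟩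
  obtain ⟨B, hB0, hB1, hB2⟩ : ∃ B : ℝ, 0 ≤ B ∧ -B ≤ g 0 ∧ -B ≤ g z :=
    ⟨|g 0| + |g z|, by positivity,
      by have h := neg_abs_le (g 0); have h2 := abs_nonneg (g z); linarith,
      by have h := neg_abs_le (g z); have h2 := abs_nonneg (g 0); linarith⟩
  have hlin : ∀ x : ℝ, -(A * |x|) - B ≤ g x := by
    intro x
    rcases le_or_gt (|x|) 1 with hx | hx
    · have hx' : x ∈ Set.Icc (-1:ℝ) 1 := ⟨(abs_le.mp hx).1, (abs_le.mp hx).2⟩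
      have h1 : g z ≤ g x := hzmin hx'
      have h3 : 0 ≤ A * |x| := by positivity
      linarith
    · rcases le_or_gt 0 x with hx0 | hx0
      · -- x > 1
        have hx1 : 1 < x := by rwa [abs_of_nonneg hx0] at hx
        have hxpos : 0 < x := by linarith
        have hb1 : (0:ℝ) ≤ 1 - 1/x := by
          have : 1/x ≤ 1 := by rw [div_le_one hxpos]; linarith
          linarith
        have hb2 : (0:ℝ) ≤ 1/x := by positivity
        have hb3 : (1 - 1/x) + 1/x = 1 := by ring
        have hcvx := hQ.2 (Set.mem_univ (0:ℝ)) (Set.mem_univ x) hb1 hb2 hb3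
        have hxne : x ≠ 0 := ne_of_gt hxpos
        simp only [smul_eq_mul, mul_zero, zero_add] at hcvx
        rw [show (1/x) * x = 1 by field_simp] at hcvx
        have hmul := mul_le_mul_of_nonneg_left hcvx hxpos.le
        have hexp : x * ((1 - 1/x) * g 0 + (1/x) * g x) = (x - 1) * g 0 + g x := by
          field_simp; try ring
        rw [hexp] at hmul
        have h5 : g 0 + (g 1 - g 0) * x ≤ g x := by nlinarith
        have h6 : -A * x ≤ (g 1 - g 0) * x := mul_le_mul_of_nonneg_right hA1 hxpos.le
        rw [abs_of_nonneg hx0]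
        linarith
      · -- x < -1
        have hx1 : x < -1 := by rw [abs_of_neg hx0] at hx; linarith
        have hxpos : 0 < -x := by linarith
        have ht1 : 0 < -1/x := by
          rw [neg_div]
          exact neg_pos.mpr (one_div_neg.mpr hx0)
        have hb1 : (0:ℝ) ≤ 1 - (-1/x) := by
          have : -1/x ≤ 1 := by rw [div_le_iff_of_neg hx0]; linarith
          linarith
        have hb3 : (1 - (-1/x)) + (-1/x) = 1 := by ring
        have hcvx := hQ.2 (Set.mem_univ (0:ℝ)) (Set.mem_univ x) hb1 ht1.le hb3
        have hxne : x ≠ 0 := ne_of_lt hx0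
        simp only [smul_eq_mul, mul_zero, zero_add] at hcvx
        rw [show (-1/x) * x = -1 by field_simp] at hcvx
        have hmul := mul_le_mul_of_nonneg_left hcvx hxpos.le
        have hexp : (-x) * ((1 - (-1/x)) * g 0 + (-1/x) * g x) = (-x - 1) * g 0 + g x := by
          field_simp; try ring
        rw [hexp] at hmul
        have h5 : g 0 + (g (-1) - g 0) * (-x) ≤ g x := by nlinarith
        have h6 : -A * (-x) ≤ (g (-1) - g 0) * (-x) := mul_le_mul_of_nonneg_right hA2 hxpos.le
        rw [abs_of_neg hx0]
        linarith
  refine ⟨B + A ^ 2 / (2 * ρ), fun x => ?_⟩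
  have h1 := hlin x
  have hgx : g x = Q x - ρ * x ^ 2 := rfl
  rw [hgx] at h1
  have h2 : A * |x| ≤ ρ / 2 * x ^ 2 + A ^ 2 / (2 * ρ) := by
    have key : ∀ u : ℝ, A * u ≤ ρ / 2 * u ^ 2 + A ^ 2 / (2 * ρ) := by
      intro u
      rw [← sub_nonneg]
      have heq : ρ / 2 * u ^ 2 + A ^ 2 / (2 * ρ) - A * u
          = (ρ * u - A) ^ 2 / (2 * ρ) := by field_simp; ring
      rw [heq]; positivity
    calc A * |x| ≤ ρ / 2 * |x| ^ 2 + A ^ 2 / (2 * ρ) := key |x|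
      _ = ρ / 2 * x ^ 2 + A ^ 2 / (2 * ρ) := by rw [sq_abs]
  linarith

lemma energy_bdd (Q : ℝ → ℝ) (ρ : ℝ) (hρ : 0 < ρ) (D : ℝ)
    (hD : ∀ x : ℝ, ρ / 2 * x ^ 2 - D ≤ Q x)
    (n : ℕ) (hn : 2 ≤ n) :
    ∃ B : ℝ, ∀ x : Fin n → ℝ, B ≤ discreteEnergy Q n x := by
  have hN2 : (2:ℝ) ≤ (n:ℝ) := by exact_mod_cast hn
  have hN0 : (0:ℝ) < (n:ℝ) := by linarith
  have hN1 : (0:ℝ) < (n:ℝ) - 1 := by linarith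
  set s : ℝ := ρ * ((n:ℝ) - 1) / (8 * n) with hs_def
  have hs : 0 < s := by positivity
  set K : ℝ := max (-Real.log s) 0 with hK_def
  have hK0 : 0 ≤ K := le_max_right _ _
  refine ⟨-D - (2 * (n:ℝ) / ((n:ℝ) - 1)) * K, fun x => ?_⟩
  set T : ℝ := ∑ i, (x i) ^ 2 with hT_def
  have hT0 : 0 ≤ T := Finset.sum_nonneg fun i _ => sq_nonneg _
  -- lower bound for the Q-sum
  have hQsum : ρ / 2 * T - (n:ℝ) * D ≤ ∑ i, Q (x i) := by
    have : ∑ i, (ρ / 2 * (x i) ^ 2 - D) ≤ ∑ i, Q (x i) :=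
      Finset.sum_le_sum fun i _ => hD (x i)
    calc ρ / 2 * T - (n:ℝ) * D = ∑ i, (ρ / 2 * (x i) ^ 2 - D) := by
          rw [Finset.sum_sub_distrib, ← Finset.mul_sum, Finset.sum_const,
            Finset.card_univ, Fintype.card_fin, nsmul_eq_mul]
      _ ≤ _ := this
  -- upper bound for the log-sum
  have hLsum : (∑ p ∈ Finset.univ.filter (fun p : Fin n × Fin n => p.1 < p.2),
      Real.log |x p.1 - x p.2|) ≤ 2 * s * (n:ℝ) * T + (n:ℝ) ^ 2 * K := by
    have h1 : (∑ p ∈ Finset.univ.filter (fun p : Fin n × Fin n => p.1 < p.2),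
        Real.log |x p.1 - x p.2|)
        ≤ ∑ p ∈ Finset.univ.filter (fun p : Fin n × Fin n => p.1 < p.2),
            (s * ((x p.1) ^ 2 + (x p.2) ^ 2) + K) :=
      Finset.sum_le_sum fun p _ => log_abs_sub_le s (x p.1) (x p.2) hs
    have h2 : (∑ p ∈ Finset.univ.filter (fun p : Fin n × Fin n => p.1 < p.2),
            (s * ((x p.1) ^ 2 + (x p.2) ^ 2) + K))
        ≤ ∑ p : Fin n × Fin n, (s * ((x p.1) ^ 2 + (x p.2) ^ 2) + K) := by
      apply Finset.sum_le_sum_of_subset_of_nonneg (Finset.filter_subset _ _)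
      intro p _ _
      positivity
    have inner : ∀ i : Fin n, ∑ j : Fin n, (s * ((x i) ^ 2 + (x j) ^ 2) + K)
        = (n:ℝ) * (s * (x i) ^ 2) + (s * T + (n:ℝ) * K) := by
      intro i
      calc ∑ j : Fin n, (s * ((x i) ^ 2 + (x j) ^ 2) + K)
          = ∑ j : Fin n, (s * (x i) ^ 2 + (s * (x j) ^ 2 + K)) := by
            apply Finset.sum_congr rfl; intro j _; ring
        _ = (n:ℝ) * (s * (x i) ^ 2) + (s * T + (n:ℝ) * K) := by
            rw [Finset.sum_add_distrib, Finset.sum_add_distrib, Finset.sum_const,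
              Finset.sum_const, Finset.card_univ, Fintype.card_fin, nsmul_eq_mul,
              nsmul_eq_mul, ← Finset.mul_sum, ← hT_def]
    have h3 : ∑ p : Fin n × Fin n, (s * ((x p.1) ^ 2 + (x p.2) ^ 2) + K)
        = 2 * s * (n:ℝ) * T + (n:ℝ) ^ 2 * K := by
      rw [Fintype.sum_prod_type]
      calc ∑ i : Fin n, ∑ j : Fin n, (s * ((x i) ^ 2 + (x j) ^ 2) + K)
          = ∑ i : Fin n, ((n:ℝ) * (s * (x i) ^ 2) + (s * T + (n:ℝ) * K)) :=
            Finset.sum_congr rfl (fun i _ => inner i)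
        _ = 2 * s * (n:ℝ) * T + (n:ℝ) ^ 2 * K := by
            rw [Finset.sum_add_distrib, Finset.sum_const, Finset.card_univ,
              Fintype.card_fin, nsmul_eq_mul]
            rw [← Finset.mul_sum, ← Finset.mul_sum, ← hT_def]
            ring
    linarith
  -- final assembly
  have hSL := hLsum
  unfold discreteEnergy
  have c1 : (0:ℝ) ≤ 1 / (n:ℝ) := by positivity
  have c2 : (0:ℝ) ≤ 2 / ((n:ℝ) * ((n:ℝ) - 1)) := by positivity
  have e1 := mul_le_mul_of_nonneg_left hQsum c1
  have e2 := mul_le_mul_of_nonneg_left hSL c2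
  have identity : (1 / (n:ℝ)) * (ρ / 2 * T - (n:ℝ) * D)
      - (2 / ((n:ℝ) * ((n:ℝ) - 1))) * (2 * s * (n:ℝ) * T + (n:ℝ) ^ 2 * K)
      = -D - (2 * (n:ℝ) / ((n:ℝ) - 1)) * K := by
    rw [hs_def]
    field_simp
    ring
  linarith

lemma key_identity (Q : ℝ → ℝ) (n : ℕ) (hn : 2 ≤ n) (y : Fin (n + 1) → ℝ) :
    ((n : ℝ) + 1) * discreteEnergy Q (n + 1) y
      = ∑ i : Fin (n + 1), discreteEnergy Q n (y ∘ i.succAbove) := by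
  classical
  have hN2 : (2:ℝ) ≤ (n:ℝ) := by exact_mod_cast hn
  have hN0 : (0:ℝ) < (n:ℝ) := by linarith
  have hN1 : (0:ℝ) < (n:ℝ) - 1 := by linarith
  set SQ : ℝ := ∑ k, Q (y k) with hSQ
  set SL : ℝ := ∑ q ∈ Finset.univ.filter (fun q : Fin (n+1) × Fin (n+1) => q.1 < q.2),
      Real.log |y q.1 - y q.2| with hSL
  -- part (a): sum of Q over a deleted configuration
  have ha : ∀ i : Fin (n+1), ∑ j, Q ((y ∘ i.succAbove) j) = SQ - Q (y i) := by
    intro i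
    have h := Fin.sum_univ_succAbove (fun k => Q (y k)) i
    rw [hSQ, h]
    simp [Function.comp]
  -- part (b): log-sum of a deleted configuration as a filtered sum
  have hb : ∀ i : Fin (n+1),
      (∑ p ∈ Finset.univ.filter (fun p : Fin n × Fin n => p.1 < p.2),
        Real.log |(y ∘ i.succAbove) p.1 - (y ∘ i.succAbove) p.2|)
      = ∑ q ∈ Finset.univ.filter
          (fun q : Fin (n+1) × Fin (n+1) => q.1 < q.2 ∧ q.1 ≠ i ∧ q.2 ≠ i),
          Real.log |y q.1 - y q.2| := by
    intro i
    apply Finset.sum_nbij (fun p : Fin n × Fin n => (i.succAbove p.1, i.succAbove p.2))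
    · intro p hp
      simp only [Finset.mem_filter, Finset.mem_univ, true_and] at hp ⊢
      exact ⟨Fin.succAbove_lt_succAbove_iff.2 hp, Fin.succAbove_ne i p.1, Fin.succAbove_ne i p.2⟩
    · intro p _ q _ h
      simp only [Prod.mk.injEq] at h
      exact Prod.ext (Fin.succAbove_right_injective h.1) (Fin.succAbove_right_injective h.2)
    · intro q hq
      simp only [Finset.coe_filter, Set.mem_setOf_eq, Finset.mem_univ, true_and] at hq
      obtain ⟨hlt, h1, h2⟩ := hq
      obtain ⟨a, ha'⟩ := Fin.exists_succAbove_eq h1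
      obtain ⟨b, hb'⟩ := Fin.exists_succAbove_eq h2
      refine ⟨(a, b), ?_, ?_⟩
      · simp only [Finset.coe_filter, Set.mem_setOf_eq, Finset.mem_univ, true_and]
        rw [← ha', ← hb'] at hlt
        exact Fin.succAbove_lt_succAbove_iff.1 hlt
      · simp [ha', hb']
    · intro p _
      rfl
  -- part (c): summing the filtered sums over i
  have hc : (∑ i : Fin (n+1), ∑ q ∈ Finset.univ.filter
        (fun q : Fin (n+1) × Fin (n+1) => q.1 < q.2 ∧ q.1 ≠ i ∧ q.2 ≠ i),
        Real.log |y q.1 - y q.2|)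
      = ((n:ℝ) - 1) * SL := by
    have step1 : ∀ i : Fin (n+1), (∑ q ∈ Finset.univ.filter
        (fun q : Fin (n+1) × Fin (n+1) => q.1 < q.2 ∧ q.1 ≠ i ∧ q.2 ≠ i),
        Real.log |y q.1 - y q.2|)
        = ∑ q ∈ Finset.univ.filter (fun q : Fin (n+1) × Fin (n+1) => q.1 < q.2),
            (if q.1 ≠ i ∧ q.2 ≠ i then Real.log |y q.1 - y q.2| else 0) := by
      intro i
      rw [← Finset.sum_filter, Finset.filter_filter]
    rw [Finset.sum_congr rfl (fun i _ => step1 i), Finset.sum_comm]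
    rw [hSL, Finset.mul_sum]
    apply Finset.sum_congr rfl
    intro q hq
    simp only [Finset.mem_filter, Finset.mem_univ, true_and] at hq
    have hne : q.1 ≠ q.2 := ne_of_lt hq
    have hset : Finset.univ.filter (fun i : Fin (n+1) => q.1 ≠ i ∧ q.2 ≠ i)
        = Finset.univ \ {q.1, q.2} := by
      ext k
      simp only [Finset.mem_filter, Finset.mem_univ, true_and, Finset.mem_sdiff,
        Finset.mem_insert, Finset.mem_singleton, not_or, ne_eq, eq_comm]
      try tauto
    have hcard : (Finset.univ.filter (fun i : Fin (n+1) => q.1 ≠ i ∧ q.2 ≠ i)).card = n - 1 := by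
      rw [hset, Finset.card_sdiff_of_subset (Finset.subset_univ _), Finset.card_univ, Fintype.card_fin,
        Finset.card_insert_of_notMem (by simpa using hne), Finset.card_singleton]
      omega
    calc (∑ i : Fin (n+1), if q.1 ≠ i ∧ q.2 ≠ i then Real.log |y q.1 - y q.2| else 0)
        = ∑ i ∈ Finset.univ.filter (fun i : Fin (n+1) => q.1 ≠ i ∧ q.2 ≠ i),
            Real.log |y q.1 - y q.2| := (Finset.sum_filter _ _).symm
      _ = ((n - 1 : ℕ) : ℝ) * Real.log |y q.1 - y q.2| := by
          rw [Finset.sum_const, hcard, nsmul_eq_mul]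
      _ = ((n:ℝ) - 1) * Real.log |y q.1 - y q.2| := by
          congr 1
          have h1 : 1 ≤ n := le_trans (by norm_num) hn
          push_cast [Nat.cast_sub h1]
          ring
  -- assemble
  unfold discreteEnergy
  rw [Finset.sum_sub_distrib]
  rw [← Finset.mul_sum, ← Finset.mul_sum]
  rw [Finset.sum_congr rfl (fun i _ => ha i), Finset.sum_congr rfl (fun i _ => hb i), hc]
  rw [Finset.sum_sub_distrib, Finset.sum_const, Finset.card_univ, Fintype.card_fin,
    nsmul_eq_mul, ← hSQ]
  push_cast
  rw [← hSL]
  field_simp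
  ring_nf
  rw [mul_comm (n:ℝ) SL, mul_inv_cancel_right₀ hN0.ne']


theorem stmt_12 (Q : ℝ → ℝ) (hQcont : Continuous Q) (ρ : ℝ) (hρ : 0 < ρ)
    (hQ : ConvexOn ℝ Set.univ (fun x => Q x - ρ * x ^ 2))
    (n : ℕ) (hn : 2 ≤ n) :
    minEnergy Q n ≤ minEnergy Q (n + 1) := by
  classical
  obtain ⟨D, hD⟩ := quad_lower Q hQcont ρ hρ hQ
  obtain ⟨B, hB⟩ := energy_bdd Q ρ hρ D hD n hn
  have hbdd : BddBelow {E : ℝ | ∃ x : Fin n → ℝ, Function.Injective x ∧ E = discreteEnergy Q n x} := by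
    refine ⟨B, ?_⟩
    rintro E ⟨x, -, rfl⟩
    exact hB x
  have hne : {E : ℝ | ∃ x : Fin (n+1) → ℝ, Function.Injective x ∧ E = discreteEnergy Q (n+1) x}.Nonempty := by
    refine ⟨discreteEnergy Q (n+1) (fun i => (i : ℕ) : Fin (n+1) → ℝ), fun i => ((i : ℕ) : ℝ), ?_, rfl⟩
    intro i j h
    exact Fin.ext (Nat.cast_injective h)
  rw [minEnergy]
  apply le_csInf hne
  rintro E ⟨y, hy, rfl⟩
  have hkey := key_identity Q n hn y
  have hle : ∀ i : Fin (n+1), minEnergy Q n ≤ discreteEnergy Q n (y ∘ i.succAbove) := by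
    intro i
    apply csInf_le hbdd
    exact ⟨y ∘ i.succAbove, hy.comp Fin.succAbove_right_injective, rfl⟩
  have hsum : ((n:ℝ) + 1) * minEnergy Q n ≤ ((n:ℝ) + 1) * discreteEnergy Q (n+1) y := by
    rw [hkey]
    calc ((n:ℝ) + 1) * minEnergy Q n = ∑ _i : Fin (n+1), minEnergy Q n := by
          rw [Finset.sum_const, Finset.card_univ, Fintype.card_fin, nsmul_eq_mul]
          push_cast; ring
      _ ≤ _ := Finset.sum_le_sum fun i _ => hle i
  have hpos : (0:ℝ) < (n:ℝ) + 1 := by positivity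
  exact le_of_mul_le_mul_left hsum hpos
end

section
/- Let x, y ∈ ℝⁿ be sorted in nondecreasing order. Then the squared 2-Wasserstein distance between the empirical measures μ(x) = (1/n)Σδ_{xᵢ} and μ(y) = (1/n)Σδ_{yᵢ} equals (1/n)·Σᵢ (xᵢ - yᵢ)², i.e., the infimum over couplings is attained by the monotone matching. -/
open MeasureTheory

/-- The squared 2-Wasserstein distance (as an extended nonnegative real),
defined as the infimum over couplings of the integral of the squared distance. -/
noncomputable def W2sq (μ ν : Measure ℝ) : ENNReal :=
  ⨅ (π : Measure (ℝ × ℝ)) (_ : π.map Prod.fst = μ) (_ : π.map Prod.snd = ν),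
    ∫⁻ p, ENNReal.ofReal ((p.1 - p.2) ^ 2) ∂π

/-- The empirical measure of a configuration of `n` points. -/
noncomputable def empirical (n : ℕ) (x : Fin n → ℝ) : Measure ℝ :=
  ((n : ENNReal)⁻¹) • ∑ i, Measure.dirac (x i)

open Finset in
lemma key_potential (x y : ℕ → ℝ) (hx : Monotone x) (hy : Monotone y) (i j : ℕ) :
    2 * y i * (x j - x i) ≤
      (∑ k ∈ range j, 2 * y k * (x (k+1) - x k)) -
      (∑ k ∈ range i, 2 * y k * (x (k+1) - x k)) := by
  set d : ℕ → ℝ := fun k => 2 * y k * (x (k+1) - x k) with hd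
  have tel : ∀ m : ℕ, ∑ k ∈ range m, (x (k+1) - x k) = x m - x 0 :=
    fun m => Finset.sum_range_sub (fun k => x k) m
  rcases le_total i j with hij | hij
  · rw [← Finset.sum_Ico_eq_sub _ hij]
    have h1 : ∀ k ∈ Ico i j, 2 * y i * (x (k+1) - x k) ≤ d k := by
      intro k hk
      rw [mem_Ico] at hk
      exact mul_le_mul_of_nonneg_right
        (by have := hy hk.1; linarith) (by have := hx (Nat.le_succ k); linarith)
    calc 2 * y i * (x j - x i)
        = ∑ k ∈ Ico i j, 2 * y i * (x (k+1) - x k) := by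
          rw [← Finset.mul_sum, Finset.sum_Ico_eq_sub _ hij, tel, tel]; ring
      _ ≤ ∑ k ∈ Ico i j, d k := Finset.sum_le_sum h1
  · have h3 : ∀ k ∈ Ico j i, d k ≤ 2 * y i * (x (k+1) - x k) := by
      intro k hk
      rw [mem_Ico] at hk
      exact mul_le_mul_of_nonneg_right
        (by have := hy hk.2.le; linarith) (by have := hx (Nat.le_succ k); linarith)
    have h4 : (∑ k ∈ range i, d k) - (∑ k ∈ range j, d k) ≤ 2 * y i * (x i - x j) := by
      rw [← Finset.sum_Ico_eq_sub _ hij]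
      calc ∑ k ∈ Ico j i, d k ≤ ∑ k ∈ Ico j i, 2 * y i * (x (k+1) - x k) :=
            Finset.sum_le_sum h3
        _ = 2 * y i * (x i - x j) := by
            rw [← Finset.mul_sum, Finset.sum_Ico_eq_sub _ hij, tel, tel]; ring
    linarith

lemma map_finsetSum' {α β ι : Type*} [MeasurableSpace α] [MeasurableSpace β]
    (s : Finset ι) (μ : ι → Measure α) {f : α → β} (hf : Measurable f) :
    Measure.map f (∑ i ∈ s, μ i) = ∑ i ∈ s, Measure.map f (μ i) := by
  classical
  induction s using Finset.cons_induction with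
  | empty => simp
  | cons a s ha ih => rw [Finset.sum_cons, Measure.map_add _ _ hf, ih, Finset.sum_cons]

lemma measure_finset_eq_sum {α : Type*} [MeasurableSpace α] [MeasurableSingletonClass α]
    (π : Measure α) (t : Finset α) : π ↑t = ∑ p ∈ t, π {p} := by
  rw [show (↑t : Set α) = ⋃ p ∈ t, {p} by ext p; simp]
  exact measure_biUnion_finset (fun p _ q _ hpq => Set.disjoint_singleton.2 hpq)
    (fun b _ => measurableSet_singleton b)

lemma empirical_singleton (n : ℕ) (x : Fin n → ℝ) (s : ℝ) :
    empirical n x {s}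
      = (n : ENNReal)⁻¹ * ((Finset.univ.filter (fun i => x i = s)).card : ENNReal) := by
  classical
  rw [empirical, Measure.smul_apply, Measure.finset_sum_apply, smul_eq_mul]
  congr 1
  rw [← Finset.sum_boole]
  refine Finset.sum_congr rfl fun i _ => ?_
  rw [Measure.dirac_apply]
  by_cases h : x i = s <;> simp [h]

lemma empirical_compl_range (n : ℕ) (x : Fin n → ℝ) :
    empirical n x ((Set.range x)ᶜ) = 0 := by
  rw [empirical, Measure.smul_apply, Measure.finset_sum_apply, smul_eq_mul]
  have : ∀ i ∈ Finset.univ, Measure.dirac (x i) ((Set.range x)ᶜ) = 0 := by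
    intro i _
    rw [Measure.dirac_apply]
    exact Set.indicator_of_notMem (by simp) _
  rw [Finset.sum_congr rfl this]
  simp

lemma empirical_univ (n : ℕ) (hn : 1 ≤ n) (x : Fin n → ℝ) :
    empirical n x Set.univ = 1 := by
  rw [empirical, Measure.smul_apply, Measure.finset_sum_apply, smul_eq_mul]
  simp only [Measure.dirac_apply, Set.indicator_of_mem (Set.mem_univ _), Pi.one_apply]
  rw [Finset.sum_const, Finset.card_univ, Fintype.card_fin, nsmul_eq_mul, mul_one]
  exact ENNReal.inv_mul_cancel (Nat.cast_ne_zero.mpr (by omega)) (ENNReal.natCast_ne_top n)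

theorem stmt_14 (n : ℕ) (hn : 1 ≤ n) (x y : Fin n → ℝ)
    (hx : Monotone x) (hy : Monotone y) :
    W2sq (empirical n x) (empirical n y)
      = ENNReal.ofReal ((1 / (n : ℝ)) * ∑ i, (x i - y i) ^ 2) := by
  classical
  haveI : NeZero n := ⟨by omega⟩
  have hn0 : (0:ℝ) < n := by exact_mod_cast hn
  have hlt : ∀ k : ℕ, min k (n-1) < n := fun k => by omega
  set x' : ℕ → ℝ := fun k => x ⟨min k (n-1), hlt k⟩ with hx'def
  set y' : ℕ → ℝ := fun k => y ⟨min k (n-1), hlt k⟩ with hy'def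
  have hx'm : Monotone x' := fun k l hkl => hx (by simp only [Fin.mk_le_mk]; omega)
  have hy'm : Monotone y' := fun k l hkl => hy (by simp only [Fin.mk_le_mk]; omega)
  have hx'eq : ∀ i : Fin n, x' (i : ℕ) = x i := fun i => congrArg x (by
    have := i.isLt; exact Fin.ext (by simp; omega))
  have hy'eq : ∀ i : Fin n, y' (i : ℕ) = y i := fun i => congrArg y (by
    have := i.isLt; exact Fin.ext (by simp; omega))
  set a : ℕ → ℝ := fun m => ∑ k ∈ Finset.range m, 2 * y' k * (x' (k+1) - x' k) with hadef
  have key : ∀ i j : ℕ, 2 * y' i * (x' j - x' i) ≤ a j - a i :=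
    fun i j => key_potential x' y' hx'm hy'm i j
  have hne : (Finset.univ : Finset (Fin n)).Nonempty := Finset.univ_nonempty
  set F : ℝ → ℝ := fun s =>
    s^2 - Finset.univ.sup' hne (fun i : Fin n => a i + 2 * y' i * (s - x' i)) with hFdef
  set G : ℝ → ℝ := fun t =>
    t^2 - Finset.univ.sup' hne (fun j : Fin n => 2 * x' j * t - a j) with hGdef
  have hFval : ∀ i : Fin n, F (x i) = (x i)^2 - a i := by
    intro i
    have h1 : Finset.univ.sup' hne (fun j : Fin n => a j + 2 * y' j * (x i - x' j)) = a i := by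
      apply le_antisymm
      · apply Finset.sup'_le
        intro j _
        have hk := key (j : ℕ) (i : ℕ)
        rw [hx'eq i] at hk
        linarith
      · have h2 := Finset.le_sup' (fun j : Fin n => a j + 2 * y' j * (x i - x' j))
          (Finset.mem_univ i)
        rw [hx'eq i] at h2
        simp only [sub_self, mul_zero, add_zero] at h2; exact h2
    simp only [hFdef, h1]
  have hGval : ∀ i : Fin n, G (y i) = (y i)^2 - (2 * x i * y i - a i) := by
    intro i
    have h1 : Finset.univ.sup' hne (fun j : Fin n => 2 * x' j * (y i) - a j)
        = 2 * x i * y i - a i := by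
      apply le_antisymm
      · apply Finset.sup'_le
        intro j _
        have hk := key (i : ℕ) (j : ℕ)
        rw [hx'eq i, hy'eq i] at hk
        nlinarith [hk]
      · have h2 := Finset.le_sup' (fun j : Fin n => 2 * x' j * (y i) - a j)
          (Finset.mem_univ i)
        rw [hx'eq i] at h2
        exact h2
    simp only [hGdef, h1]
  have hgrid' : ∀ i j : Fin n, F (x i) + G (y j) ≤ (x i - y j)^2 := by
    intro i j
    rw [hFval i]
    have h2 := Finset.le_sup' (fun k : Fin n => 2 * x' k * (y j) - a k) (Finset.mem_univ i)
    rw [hx'eq i] at h2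
    have h3 : G (y j) ≤ (y j)^2 - (2 * x i * y j - a i) := by
      simp only [hGdef]
      linarith
    nlinarith [h3]
  have hdiag : ∀ i : Fin n, F (x i) + G (y i) = (x i - y i)^2 := by
    intro i
    rw [hFval i, hGval i]; ring
  -- upper bound
  set π₀ : Measure (ℝ×ℝ) := (n : ENNReal)⁻¹ • ∑ i : Fin n, Measure.dirac (x i, y i) with hπ₀
  have hfst0 : π₀.map Prod.fst = empirical n x := by
    rw [hπ₀, Measure.map_smul, map_finsetSum' _ _ measurable_fst, empirical]
    congr 1
    refine Finset.sum_congr rfl fun i _ => ?_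
    rw [Measure.map_dirac' measurable_fst]
  have hsnd0 : π₀.map Prod.snd = empirical n y := by
    rw [hπ₀, Measure.map_smul, map_finsetSum' _ _ measurable_snd, empirical]
    congr 1
    refine Finset.sum_congr rfl fun i _ => ?_
    rw [Measure.map_dirac' measurable_snd]
  have hofReal : ENNReal.ofReal ((1 / (n:ℝ)) * ∑ i, (x i - y i)^2)
      = (n:ENNReal)⁻¹ * ∑ i, ENNReal.ofReal ((x i - y i)^2) := by
    rw [ENNReal.ofReal_mul (by positivity), ENNReal.ofReal_sum_of_nonneg
      (fun i _ => sq_nonneg _), one_div, ENNReal.ofReal_inv_of_pos hn0,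
      ENNReal.ofReal_natCast]
  have hcost0 : ∫⁻ p, ENNReal.ofReal ((p.1 - p.2)^2) ∂π₀
      = ENNReal.ofReal ((1 / (n:ℝ)) * ∑ i, (x i - y i)^2) := by
    rw [hπ₀, lintegral_smul_measure, lintegral_finset_sum_measure, hofReal]
    simp only [lintegral_dirac, smul_eq_mul]
  have hub : W2sq (empirical n x) (empirical n y)
      ≤ ENNReal.ofReal ((1 / (n:ℝ)) * ∑ i, (x i - y i)^2) := by
    calc W2sq (empirical n x) (empirical n y)
        ≤ ∫⁻ p, ENNReal.ofReal ((p.1 - p.2)^2) ∂π₀ := by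
          unfold W2sq
          exact (iInf₂_le π₀ hfst0).trans (iInf_le _ hsnd0)
      _ = _ := hcost0
  -- lower bound
  have hlb : ENNReal.ofReal ((1 / (n:ℝ)) * ∑ i, (x i - y i)^2)
      ≤ W2sq (empirical n x) (empirical n y) := by
    unfold W2sq
    refine le_iInf fun π => le_iInf fun hfst => le_iInf fun hsnd => ?_
    have hπuniv : π Set.univ ≠ ⊤ := by
      have h1 : π.map Prod.fst Set.univ = π Set.univ := by
        rw [Measure.map_apply measurable_fst MeasurableSet.univ, Set.preimage_univ]
      rw [hfst, empirical_univ n hn] at h1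
      rw [← h1]
      exact ENNReal.one_ne_top
    have hfin : ∀ p : ℝ×ℝ, π {p} ≠ ⊤ :=
      fun p => ne_top_of_le_ne_top hπuniv (measure_mono (Set.subset_univ _))
    have hSxc : π (Prod.fst ⁻¹' ((↑(Finset.univ.image x) : Set ℝ))ᶜ) = 0 := by
      rw [← Measure.map_apply measurable_fst (Finset.measurableSet _).compl, hfst]
      rw [show ((↑(Finset.univ.image x) : Set ℝ))ᶜ = (Set.range x)ᶜ by
        rw [Finset.coe_image, Finset.coe_univ, Set.image_univ]]
      exact empirical_compl_range n x
    have hSyc : π (Prod.snd ⁻¹' ((↑(Finset.univ.image y) : Set ℝ))ᶜ) = 0 := by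
      rw [← Measure.map_apply measurable_snd (Finset.measurableSet _).compl, hsnd]
      rw [show ((↑(Finset.univ.image y) : Set ℝ))ᶜ = (Set.range y)ᶜ by
        rw [Finset.coe_image, Finset.coe_univ, Set.image_univ]]
      exact empirical_compl_range n y
    have hT : π (((↑(Finset.univ.image x) : Set ℝ) ×ˢ (↑(Finset.univ.image y) : Set ℝ))ᶜ) = 0 := by
      refine measure_mono_null ?_ (measure_union_null hSxc hSyc)
      intro p hp
      simp only [Set.mem_compl_iff, Set.mem_prod, not_and_or] at hp
      simp only [Set.mem_union, Set.mem_preimage, Set.mem_compl_iff]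
      tauto
    have hrestrict : ∫⁻ p, ENNReal.ofReal ((p.1-p.2)^2) ∂π
        = ∑ p ∈ (Finset.univ.image x) ×ˢ (Finset.univ.image y),
            ENNReal.ofReal ((p.1-p.2)^2) * π {p} := by
      have hres : π.restrict ↑((Finset.univ.image x) ×ˢ (Finset.univ.image y)) = π := by
        apply Measure.restrict_eq_self_of_ae_mem
        rw [ae_iff]
        rw [show {p : ℝ×ℝ | p ∉ (↑((Finset.univ.image x) ×ˢ (Finset.univ.image y)) : Set (ℝ×ℝ))}
            = (((↑(Finset.univ.image x) : Set ℝ) ×ˢ (↑(Finset.univ.image y) : Set ℝ))ᶜ) by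
          rw [Finset.coe_product]; rfl]
        exact hT
      conv_lhs => rw [← hres]
      exact lintegral_finset _ _
    have hcol : ∀ s ∈ Finset.univ.image x,
        ∑ t ∈ Finset.univ.image y, π {(s,t)} = empirical n x {s} := by
      intro s hs
      have e2 : π (({s} : Set ℝ) ×ˢ (↑(Finset.univ.image y) : Set ℝ)) = π (Prod.fst ⁻¹' {s}) := by
        apply le_antisymm
        · exact measure_mono (fun p hp => hp.1)
        · have hsub : Prod.fst ⁻¹' ({s} : Set ℝ)
              ⊆ (({s} : Set ℝ) ×ˢ (↑(Finset.univ.image y) : Set ℝ))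
                ∪ (Prod.snd ⁻¹' ((↑(Finset.univ.image y) : Set ℝ))ᶜ) := by
            intro p hp
            by_cases h : p.2 ∈ (↑(Finset.univ.image y) : Set ℝ)
            · exact Or.inl ⟨hp, h⟩
            · exact Or.inr h
          calc π (Prod.fst ⁻¹' ({s} : Set ℝ)) ≤ _ := measure_mono hsub
            _ ≤ π (({s} : Set ℝ) ×ˢ (↑(Finset.univ.image y) : Set ℝ))
                + π (Prod.snd ⁻¹' ((↑(Finset.univ.image y) : Set ℝ))ᶜ) := measure_union_le _ _
            _ = π (({s} : Set ℝ) ×ˢ (↑(Finset.univ.image y) : Set ℝ)) := by rw [hSyc, add_zero]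
      have e3 : π (Prod.fst ⁻¹' ({s} : Set ℝ)) = empirical n x {s} := by
        rw [← Measure.map_apply measurable_fst (measurableSet_singleton s), hfst]
      calc ∑ t ∈ Finset.univ.image y, π {(s,t)}
          = ∑ p ∈ ({s} ×ˢ (Finset.univ.image y) : Finset (ℝ×ℝ)), π {p} := by
            rw [Finset.sum_product, Finset.sum_singleton]
        _ = π ↑({s} ×ˢ (Finset.univ.image y) : Finset (ℝ×ℝ)) :=
            (measure_finset_eq_sum π _).symm
        _ = π (({s} : Set ℝ) ×ˢ (↑(Finset.univ.image y) : Set ℝ)) := by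
            rw [Finset.coe_product, Finset.coe_singleton]
        _ = π (Prod.fst ⁻¹' {s}) := e2
        _ = empirical n x {s} := e3
    have hrow : ∀ t ∈ Finset.univ.image y,
        ∑ s ∈ Finset.univ.image x, π {(s,t)} = empirical n y {t} := by
      intro t ht
      have e2 : π ((↑(Finset.univ.image x) : Set ℝ) ×ˢ ({t} : Set ℝ)) = π (Prod.snd ⁻¹' {t}) := by
        apply le_antisymm
        · exact measure_mono (fun p hp => hp.2)
        · have hsub : Prod.snd ⁻¹' ({t} : Set ℝ)
              ⊆ ((↑(Finset.univ.image x) : Set ℝ) ×ˢ ({t} : Set ℝ))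
                ∪ (Prod.fst ⁻¹' ((↑(Finset.univ.image x) : Set ℝ))ᶜ) := by
            intro p hp
            by_cases h : p.1 ∈ (↑(Finset.univ.image x) : Set ℝ)
            · exact Or.inl ⟨h, hp⟩
            · exact Or.inr h
          calc π (Prod.snd ⁻¹' ({t} : Set ℝ)) ≤ _ := measure_mono hsub
            _ ≤ π ((↑(Finset.univ.image x) : Set ℝ) ×ˢ ({t} : Set ℝ))
                + π (Prod.fst ⁻¹' ((↑(Finset.univ.image x) : Set ℝ))ᶜ) := measure_union_le _ _
            _ = π ((↑(Finset.univ.image x) : Set ℝ) ×ˢ ({t} : Set ℝ)) := by rw [hSxc, add_zero]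
      have e3 : π (Prod.snd ⁻¹' ({t} : Set ℝ)) = empirical n y {t} := by
        rw [← Measure.map_apply measurable_snd (measurableSet_singleton t), hsnd]
      calc ∑ s ∈ Finset.univ.image x, π {(s,t)}
          = ∑ p ∈ ((Finset.univ.image x) ×ˢ {t} : Finset (ℝ×ℝ)), π {p} := by
            rw [Finset.sum_product]
            refine Finset.sum_congr rfl fun s _ => ?_
            rw [Finset.sum_singleton]
        _ = π ↑((Finset.univ.image x) ×ˢ {t} : Finset (ℝ×ℝ)) :=
            (measure_finset_eq_sum π _).symm
        _ = π ((↑(Finset.univ.image x) : Set ℝ) ×ˢ ({t} : Set ℝ)) := by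
            rw [Finset.coe_product, Finset.coe_singleton]
        _ = π (Prod.snd ⁻¹' {t}) := e2
        _ = empirical n y {t} := e3
    -- real-valued weights
    set mw : ℝ×ℝ → ℝ := fun p => (π {p}).toReal with hmw
    have hcolR : ∀ s ∈ Finset.univ.image x, ∑ t ∈ Finset.univ.image y, mw (s,t)
        = (n:ℝ)⁻¹ * ((Finset.univ.filter (fun i => x i = s)).card : ℝ) := by
      intro s hs
      have := hcol s hs
      calc ∑ t ∈ Finset.univ.image y, mw (s,t)
          = (∑ t ∈ Finset.univ.image y, π {(s,t)}).toReal :=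
            (ENNReal.toReal_sum (fun t _ => hfin _)).symm
        _ = (empirical n x {s}).toReal := by rw [this]
        _ = (n:ℝ)⁻¹ * ((Finset.univ.filter (fun i => x i = s)).card : ℝ) := by
            rw [empirical_singleton, ENNReal.toReal_mul, ENNReal.toReal_inv]
            simp
    have hrowR : ∀ t ∈ Finset.univ.image y, ∑ s ∈ Finset.univ.image x, mw (s,t)
        = (n:ℝ)⁻¹ * ((Finset.univ.filter (fun i => y i = t)).card : ℝ) := by
      intro t ht
      have := hrow t ht
      calc ∑ s ∈ Finset.univ.image x, mw (s,t)
          = (∑ s ∈ Finset.univ.image x, π {(s,t)}).toReal :=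
            (ENNReal.toReal_sum (fun s _ => hfin _)).symm
        _ = (empirical n y {t}).toReal := by rw [this]
        _ = (n:ℝ)⁻¹ * ((Finset.univ.filter (fun i => y i = t)).card : ℝ) := by
            rw [empirical_singleton, ENNReal.toReal_mul, ENNReal.toReal_inv]
            simp
    have hFsum : ∑ s ∈ Finset.univ.image x,
        F s * ((n:ℝ)⁻¹ * ((Finset.univ.filter (fun i => x i = s)).card : ℝ))
        = (n:ℝ)⁻¹ * ∑ i, F (x i) := by
      have h := Finset.sum_comp (s := (Finset.univ : Finset (Fin n))) F x
      rw [h, Finset.mul_sum]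
      refine Finset.sum_congr rfl fun s _ => ?_
      rw [nsmul_eq_mul]; ring
    have hGsum : ∑ t ∈ Finset.univ.image y,
        G t * ((n:ℝ)⁻¹ * ((Finset.univ.filter (fun i => y i = t)).card : ℝ))
        = (n:ℝ)⁻¹ * ∑ i, G (y i) := by
      have h := Finset.sum_comp (s := (Finset.univ : Finset (Fin n))) G y
      rw [h, Finset.mul_sum]
      refine Finset.sum_congr rfl fun t _ => ?_
      rw [nsmul_eq_mul]; ring
    have hmain : (1/(n:ℝ)) * ∑ i, (x i - y i)^2
        ≤ ∑ p ∈ (Finset.univ.image x) ×ˢ (Finset.univ.image y), (p.1-p.2)^2 * mw p := by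
      have step1 : ∑ p ∈ (Finset.univ.image x) ×ˢ (Finset.univ.image y), (F p.1 + G p.2) * mw p
          ≤ ∑ p ∈ (Finset.univ.image x) ×ˢ (Finset.univ.image y), (p.1-p.2)^2 * mw p := by
        refine Finset.sum_le_sum fun p hp => ?_
        obtain ⟨hp1, hp2⟩ := Finset.mem_product.1 hp
        obtain ⟨i, _, hi⟩ := Finset.mem_image.1 hp1
        obtain ⟨j, _, hj⟩ := Finset.mem_image.1 hp2
        refine mul_le_mul_of_nonneg_right ?_ ENNReal.toReal_nonneg
        rw [← hi, ← hj]
        exact hgrid' i j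
      have step2 : ∑ p ∈ (Finset.univ.image x) ×ˢ (Finset.univ.image y), (F p.1 + G p.2) * mw p
          = (∑ s ∈ Finset.univ.image x, F s * ∑ t ∈ Finset.univ.image y, mw (s,t))
            + (∑ t ∈ Finset.univ.image y, G t * ∑ s ∈ Finset.univ.image x, mw (s,t)) := by
        rw [Finset.sum_product]
        simp_rw [add_mul, Finset.sum_add_distrib, Finset.mul_sum]
        congr 1
        rw [Finset.sum_comm]
      have step3 : ∑ p ∈ (Finset.univ.image x) ×ˢ (Finset.univ.image y), (F p.1 + G p.2) * mw p
          = (1/(n:ℝ)) * ∑ i, (x i - y i)^2 := by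
        have c1 : ∑ s ∈ Finset.univ.image x, F s * ∑ t ∈ Finset.univ.image y, mw (s,t)
            = (n:ℝ)⁻¹ * ∑ i, F (x i) := by
          rw [← hFsum]
          exact Finset.sum_congr rfl fun s hs => by rw [hcolR s hs]
        have c2 : ∑ t ∈ Finset.univ.image y, G t * ∑ s ∈ Finset.univ.image x, mw (s,t)
            = (n:ℝ)⁻¹ * ∑ i, G (y i) := by
          rw [← hGsum]
          exact Finset.sum_congr rfl fun t ht => by rw [hrowR t ht]
        have c3 : ∑ i, (F (x i) + G (y i)) = ∑ i, (x i - y i)^2 :=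
          Finset.sum_congr rfl fun i _ => hdiag i
        rw [step2, c1, c2, ← mul_add, ← Finset.sum_add_distrib, c3, one_div]
      linarith [step1, step3.symm.le, step3.ge]
    calc ENNReal.ofReal ((1/(n:ℝ)) * ∑ i, (x i - y i)^2)
        ≤ ENNReal.ofReal (∑ p ∈ (Finset.univ.image x) ×ˢ (Finset.univ.image y),
            (p.1-p.2)^2 * mw p) := ENNReal.ofReal_le_ofReal hmain
      _ = ∑ p ∈ (Finset.univ.image x) ×ˢ (Finset.univ.image y),
            ENNReal.ofReal ((p.1-p.2)^2 * mw p) :=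
          ENNReal.ofReal_sum_of_nonneg (fun p _ => mul_nonneg (sq_nonneg _) ENNReal.toReal_nonneg)
      _ = ∑ p ∈ (Finset.univ.image x) ×ˢ (Finset.univ.image y),
            ENNReal.ofReal ((p.1-p.2)^2) * π {p} := by
          refine Finset.sum_congr rfl fun p _ => ?_
          rw [ENNReal.ofReal_mul (sq_nonneg _), hmw, ENNReal.ofReal_toReal (hfin p)]
      _ = ∫⁻ p, ENNReal.ofReal ((p.1-p.2)^2) ∂π := hrestrict.symm
  exact le_antisymm hub hlb
end
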